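/- Fix a, b with 0 < a < b < 1. For every real τ ≥ 0 and every integer ℓ ≥ 1, define the two-dimensional conformal block g(z, z̄) := (1/2)·[ k_τ(z̄) k_{τ+2ℓ}(z) + k_τ(z) k_{τ+2ℓ}(z̄) ]. Then for all z, z̄ with 0 ≤ z̄ ≤ a < b ≤ z < 1 one has the two-sided bound (1/2)·k_τ(z̄) k_{τ+2ℓ}(z) ≤ g(z, z̄) ≤ (1/2)·(1 + (1 − ρ(a)²)^{−1/2}) · k_τ(z̄) k_{τ+2ℓ}(z), where ρ(a) := a/(1 + √(1−a))². -/

import Mathlib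

/-- `k_β(z) = z^(β/2) ∑_{n≥0} ((β/2)_n)² / ((β)_n n!) · zⁿ`
(equal to `z^(β/2) ₂F₁(β/2, β/2; β; z)`; for `β = 0` the series is the constant 1). -/
noncomputable def kfun (β z : ℝ) : ℝ :=
  z ^ (β / 2) * ∑' n : ℕ,
    (Polynomial.eval (β / 2) (ascPochhammer ℝ n)) ^ 2 /
      (Polynomial.eval β (ascPochhammer ℝ n) * (n.factorial : ℝ)) * z ^ n

/-- `ρ(z) = z/(1 + √(1-z))²`. -/
noncomputable def rhoVar (z : ℝ) : ℝ := z / (1 + Real.sqrt (1 - z)) ^ 2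

open Polynomial

noncomputable def ccf (β : ℝ) (n : ℕ) : ℝ :=
  (Polynomial.eval (β / 2) (ascPochhammer ℝ n)) ^ 2 /
    (Polynomial.eval β (ascPochhammer ℝ n) * (n.factorial : ℝ))

noncomputable def Tf (β x : ℝ) : ℝ := ∑' n : ℕ, ccf β n * x ^ n

lemma poch_nonneg {x : ℝ} (hx : 0 ≤ x) (n : ℕ) : 0 ≤ (ascPochhammer ℝ n).eval x := by
  rcases eq_or_lt_of_le hx with h | h
  · rw [← h, ascPochhammer_eval_zero]
    split <;> norm_num
  · exact (ascPochhammer_pos n x h).le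

lemma ccf_nonneg {β : ℝ} (hβ : 0 ≤ β) (n : ℕ) : 0 ≤ ccf β n := by
  apply div_nonneg (sq_nonneg _)
  exact mul_nonneg (poch_nonneg hβ n) (Nat.cast_nonneg _)

lemma Tf_nonneg {β x : ℝ} (hβ : 0 ≤ β) (hx : 0 ≤ x) : 0 ≤ Tf β x :=
  tsum_nonneg fun n => mul_nonneg (ccf_nonneg hβ n) (pow_nonneg hx n)

lemma poch_succ (x : ℝ) (n : ℕ) :
    (ascPochhammer ℝ (n + 1)).eval x = (ascPochhammer ℝ n).eval x * (x + n) := by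
  simp [ascPochhammer_succ_right]

lemma factor_le {h h' : ℝ} (hh : 0 ≤ h) (hhh : h ≤ h') {n : ℝ} (hn : 0 ≤ n) :
    (h + n) ^ 2 * (2 * h' + n) ≤ (h' + n) ^ 2 * (2 * h + n) := by
  nlinarith [mul_nonneg hn hh, mul_nonneg hn (hh.trans hhh), mul_nonneg hh (hh.trans hhh),
    mul_nonneg (sub_nonneg.2 hhh) (mul_nonneg hn hh),
    mul_nonneg (sub_nonneg.2 hhh) (mul_nonneg hn (hh.trans hhh)),
    mul_nonneg (sub_nonneg.2 hhh) (mul_nonneg hh (hh.trans hhh))]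

lemma poch_cross {h h' : ℝ} (hh : 0 ≤ h) (hhh : h ≤ h') {m n : ℕ} (hmn : m ≤ n) :
    (ascPochhammer ℝ n).eval h ^ 2 * (ascPochhammer ℝ m).eval h' ^ 2 *
      ((ascPochhammer ℝ m).eval (2 * h) * (ascPochhammer ℝ n).eval (2 * h')) ≤
    (ascPochhammer ℝ m).eval h ^ 2 * (ascPochhammer ℝ n).eval h' ^ 2 *
      ((ascPochhammer ℝ n).eval (2 * h) * (ascPochhammer ℝ m).eval (2 * h')) := by
  have hh' : 0 ≤ h' := hh.trans hhh
  induction n, hmn using Nat.le_induction with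
  | base => exact le_refl _
  | succ n hmn ih =>
    rw [poch_succ, poch_succ, poch_succ, poch_succ]
    have hfac : (h + n) ^ 2 * (2 * h' + n) ≤ (h' + n) ^ 2 * (2 * h + n) :=
      factor_le hh hhh (Nat.cast_nonneg n)
    have hcn : (0:ℝ) ≤ (n:ℝ) := Nat.cast_nonneg n
    have hfacnn : 0 ≤ (h + n) ^ 2 * (2 * h' + n) := by
      apply mul_nonneg (sq_nonneg _); linarith
    have H := mul_le_mul ih hfac hfacnn (by
      apply mul_nonneg (mul_nonneg (sq_nonneg _) (sq_nonneg _))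
      exact mul_nonneg (poch_nonneg (by linarith) n) (poch_nonneg (by linarith) m))
    nlinarith [H]

lemma ccf_cross {β β' : ℝ} (hβ : 0 ≤ β) (hββ : β ≤ β') {m n : ℕ} (hmn : m ≤ n) :
    ccf β n * ccf β' m ≤ ccf β m * ccf β' n := by
  have hβ' : 0 ≤ β' := hβ.trans hββ
  rcases eq_or_lt_of_le hβ with h0 | hβpos
  · -- β = 0
    rcases Nat.eq_zero_or_pos n with hn0 | hnpos
    · have hm0 : m = 0 := Nat.le_antisymm (hn0 ▸ hmn) (Nat.zero_le m)
      subst hn0; subst hm0; exact le_refl _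
    · have : ccf β n = 0 := by
        have : (ascPochhammer ℝ n).eval (β / 2) = 0 := by
          rw [← h0]; norm_num [ascPochhammer_eval_zero, Nat.pos_iff_ne_zero.mp hnpos]
        simp [ccf, this]
      rw [this, zero_mul]
      exact mul_nonneg (ccf_nonneg hβ m) (ccf_nonneg hβ' n)
  · rcases eq_or_lt_of_le hββ with hbe | hββ'
    · subst hbe; rcases eq_or_lt_of_le hmn with rfl | _
      · exact le_refl _
      · exact le_of_eq (mul_comm _ _)
    have hβ'pos : 0 < β' := hβpos.trans_le hββ
    have hPn : 0 < (ascPochhammer ℝ n).eval β := ascPochhammer_pos n β hβpos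
    have hPm : 0 < (ascPochhammer ℝ m).eval β := ascPochhammer_pos m β hβpos
    have hPn' : 0 < (ascPochhammer ℝ n).eval β' := ascPochhammer_pos n β' hβ'pos
    have hPm' : 0 < (ascPochhammer ℝ m).eval β' := ascPochhammer_pos m β' hβ'pos
    have hfn : (0:ℝ) < n.factorial := by exact_mod_cast Nat.factorial_pos n
    have hfm : (0:ℝ) < m.factorial := by exact_mod_cast Nat.factorial_pos m
    unfold ccf
    rw [div_mul_div_comm, div_mul_div_comm, div_le_div_iff₀ (by positivity) (by positivity)]
    have key := poch_cross (h := β / 2) (h' := β' / 2) (by linarith) (by linarith) hmn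
    rw [show 2 * (β / 2) = β by ring, show 2 * (β' / 2) = β' by ring] at key
    have key2 := mul_le_mul_of_nonneg_right key
      (mul_nonneg hfm.le hfn.le : (0:ℝ) ≤ (m.factorial : ℝ) * n.factorial)
    nlinarith [key2]

lemma ccf_summable {β x : ℝ} (hβ : 0 ≤ β) (hx0 : 0 < x) (hx1 : x < 1) :
    Summable (fun n => ccf β n * x ^ n) := by
  rcases eq_or_lt_of_le hβ with h0 | hβpos
  · -- β = 0 : terms vanish for n ≥ 1
    apply summable_of_ne_finset_zero (s := {0})
    intro n hn
    have hn1 : n ≠ 0 := by simpa using hn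
    have : (ascPochhammer ℝ n).eval (β / 2) = 0 := by
      rw [← h0]; norm_num [ascPochhammer_eval_zero, hn1]
    simp [ccf, this]
  · set h := β / 2 with hh
    have hhpos : 0 < h := by positivity
    apply summable_of_ratio_norm_eventually_le (r := (1 + x) / 2) (by linarith)
    rw [Filter.eventually_atTop]
    refine ⟨⌈2 * h ^ 2 / (1 - x)⌉₊ + 1, fun n hn => ?_⟩
    have hcn : (0:ℝ) ≤ (n:ℝ) := Nat.cast_nonneg n
    have hNle : 2 * h ^ 2 / (1 - x) ≤ (n:ℝ) := by
      calc 2 * h ^ 2 / (1 - x) ≤ (⌈2 * h ^ 2 / (1 - x)⌉₊ : ℝ) := Nat.le_ceil _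
        _ ≤ (n:ℝ) := by exact_mod_cast Nat.le_of_succ_le hn
    have hkey : 2 * h ^ 2 ≤ (1 - x) * n := by
      rw [div_le_iff₀ (by linarith)] at hNle; linarith
    have hPn : 0 < (ascPochhammer ℝ n).eval β := ascPochhammer_pos n β hβpos
    have hPh : 0 ≤ (ascPochhammer ℝ n).eval h := poch_nonneg hhpos.le n
    have hfn : (0:ℝ) < n.factorial := by exact_mod_cast Nat.factorial_pos n
    have hterm_nonneg : ∀ k, 0 ≤ ccf β k * x ^ k :=
      fun k => mul_nonneg (ccf_nonneg hβ k) (pow_nonneg hx0.le k)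
    rw [Real.norm_of_nonneg (hterm_nonneg _), Real.norm_of_nonneg (hterm_nonneg _)]
    have hrec : ccf β (n + 1) * x ^ (n + 1)
        = (ccf β n * x ^ n) * (x * (h + n) ^ 2 / ((β + n) * (n + 1))) := by
      unfold ccf
      rw [poch_succ, poch_succ, Nat.factorial_succ]
      push_cast
      rw [← hh]
      field_simp
      ring
    rw [hrec]
    have hβn : (0:ℝ) < β + n := by linarith
    have hmul : x * (h + n) ^ 2 / ((β + n) * (n + 1)) ≤ (1 + x) / 2 := by
      rw [div_le_iff₀ (by positivity)]
      have hβ2h : β = 2 * h := by rw [hh]; ring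
      rw [hβ2h]
      nlinarith [mul_nonneg (mul_nonneg hhpos.le hcn) (sub_nonneg.2 hx1.le),
        mul_le_mul_of_nonneg_left hkey hx0.le, sq_nonneg (h - n),
        mul_nonneg hhpos.le hcn, mul_nonneg hcn hcn]
    calc ccf β n * x ^ n * (x * (h + n) ^ 2 / ((β + n) * (n + 1)))
        ≤ ccf β n * x ^ n * ((1 + x) / 2) :=
          mul_le_mul_of_nonneg_left hmul (hterm_nonneg n)
      _ = (1 + x) / 2 * (ccf β n * x ^ n) := by ring

set_option maxHeartbeats 1000000 in
lemma Tf_cross {β β' x y : ℝ} (hβ : 0 ≤ β) (hββ : β ≤ β') (hy : 0 < y) (hyx : y ≤ x)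
    (hx : x < 1) : Tf β x * Tf β' y ≤ Tf β y * Tf β' x := by
  have hβ' : 0 ≤ β' := hβ.trans hββ
  have hx0 : 0 < x := hy.trans_le hyx
  have hy1 : y < 1 := lt_of_le_of_lt hyx hx
  have Sbx := ccf_summable hβ hx0 hx
  have Sby := ccf_summable hβ hy hy1
  have Sb'x := ccf_summable hβ' hx0 hx
  have Sb'y := ccf_summable hβ' hy hy1
  have nn : ∀ (γ w : ℝ), 0 ≤ γ → 0 ≤ w → (0:ℕ→ℝ) ≤ fun n => ccf γ n * w ^ n := by
    intro γ w hγ hw n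
    exact mul_nonneg (ccf_nonneg hγ n) (pow_nonneg hw n)
  -- product summabilities
  have S1 : Summable (fun p : ℕ × ℕ => (ccf β p.1 * y ^ p.1) * (ccf β' p.2 * x ^ p.2)) :=
    Sby.mul_of_nonneg Sb'x (nn β y hβ hy.le) (nn β' x hβ' hx0.le)
  have S2 : Summable (fun p : ℕ × ℕ => (ccf β p.1 * x ^ p.1) * (ccf β' p.2 * y ^ p.2)) :=
    Sbx.mul_of_nonneg Sb'y (nn β x hβ hx0.le) (nn β' y hβ' hy.le)
  -- tsum products
  have norm_eq : ∀ (γ w : ℝ), 0 ≤ γ → 0 ≤ w →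
      (fun n => ‖ccf γ n * w ^ n‖) = fun n => ccf γ n * w ^ n := by
    intro γ w hγ hw; funext n; exact Real.norm_of_nonneg (nn γ w hγ hw n)
  have T1 : Tf β y * Tf β' x = ∑' p : ℕ × ℕ, (ccf β p.1 * y ^ p.1) * (ccf β' p.2 * x ^ p.2) := by
    apply tsum_mul_tsum_of_summable_norm
    · rw [norm_eq β y hβ hy.le]; exact Sby
    · rw [norm_eq β' x hβ' hx0.le]; exact Sb'x
  have T2 : Tf β x * Tf β' y = ∑' p : ℕ × ℕ, (ccf β p.1 * x ^ p.1) * (ccf β' p.2 * y ^ p.2) := by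
    apply tsum_mul_tsum_of_summable_norm
    · rw [norm_eq β x hβ hx0.le]; exact Sbx
    · rw [norm_eq β' y hβ' hy.le]; exact Sb'y
  set g : ℕ × ℕ → ℝ := fun p => ccf β p.1 * ccf β' p.2 * (y ^ p.1 * x ^ p.2 - x ^ p.1 * y ^ p.2)
    with hg
  have hg1 : (fun p : ℕ × ℕ => (ccf β p.1 * y ^ p.1) * (ccf β' p.2 * x ^ p.2)) =
      fun p => g p + (ccf β p.1 * x ^ p.1) * (ccf β' p.2 * y ^ p.2) := by
    funext p; simp only [hg]; ring
  have Sg : Summable g := by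
    have := S1.sub S2
    refine this.congr (fun p => ?_)
    simp only [hg]; ring
  have htsum_g : ∑' p, g p = Tf β y * Tf β' x - Tf β x * Tf β' y := by
    rw [T1, T2, hg1, Summable.tsum_add Sg S2]; ring
  -- swap symmetry
  have Sgswap : Summable (fun p : ℕ × ℕ => g p.swap) :=
    ((Equiv.prodComm ℕ ℕ).summable_iff).2 Sg
  have hswap : ∑' p : ℕ × ℕ, g p.swap = ∑' p, g p := (Equiv.prodComm ℕ ℕ).tsum_eq g
  have hterm : ∀ p : ℕ × ℕ, 0 ≤ g p + g p.swap := by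
    rintro ⟨m, n⟩
    have hexp : g (m, n) + g (m, n).swap =
        (ccf β m * ccf β' n - ccf β n * ccf β' m) * (y ^ m * x ^ n - x ^ m * y ^ n) := by
      simp only [hg, Prod.swap]; ring
    rw [hexp]
    have hpowkey : ∀ m n : ℕ, m ≤ n → 0 ≤ y ^ m * x ^ n - x ^ m * y ^ n := by
      intro m n hmn
      obtain ⟨d, rfl⟩ := Nat.exists_eq_add_of_le hmn
      rw [pow_add, pow_add]
      have hd : y ^ d ≤ x ^ d := pow_le_pow_left₀ hy.le hyx d
      have hxym : (0:ℝ) ≤ x ^ m * y ^ m :=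
        mul_nonneg (pow_nonneg hx0.le m) (pow_nonneg hy.le m)
      nlinarith [mul_le_mul_of_nonneg_left hd hxym]
    rcases le_total m n with hmn | hnm
    · have h1 := ccf_cross hβ hββ hmn
      have h2 := hpowkey m n hmn
      have : 0 ≤ ccf β m * ccf β' n - ccf β n * ccf β' m := by linarith
      exact mul_nonneg this h2
    · have h1 := ccf_cross hβ hββ hnm
      have h2 := hpowkey n m hnm
      have ha : ccf β m * ccf β' n - ccf β n * ccf β' m ≤ 0 := by linarith
      have hb : y ^ m * x ^ n - x ^ m * y ^ n ≤ 0 := by nlinarith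
      nlinarith [mul_nonneg (neg_nonneg.mpr ha) (neg_nonneg.mpr hb)]
  have h2g : 0 ≤ ∑' p, g p + ∑' p : ℕ × ℕ, g p.swap := by
    rw [← Summable.tsum_add Sg Sgswap]
    exact tsum_nonneg hterm
  rw [hswap] at h2g
  have : 0 ≤ ∑' p, g p := by linarith
  rw [htsum_g] at this
  linarith

lemma kfun_eq (β z : ℝ) : kfun β z = z ^ (β / 2) * Tf β z := rfl

lemma kfun_nonneg {β z : ℝ} (hβ : 0 ≤ β) (hz : 0 ≤ z) : 0 ≤ kfun β z := by
  rw [kfun_eq]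
  exact mul_nonneg (Real.rpow_nonneg hz _) (Tf_nonneg hβ hz)

lemma kfun_cross {τ z zb : ℝ} {ℓ : ℕ} (hτ : 0 ≤ τ) (hzb : 0 < zb) (hzbz : zb ≤ z)
    (hz1 : z < 1) :
    kfun τ z * kfun (τ + 2 * (ℓ : ℝ)) zb ≤ kfun τ zb * kfun (τ + 2 * (ℓ : ℝ)) z := by
  have hz0 : 0 < z := hzb.trans_le hzbz
  have hτ' : 0 ≤ τ + 2 * (ℓ : ℝ) := by positivity
  rw [kfun_eq, kfun_eq, kfun_eq, kfun_eq]
  have hTf : Tf τ z * Tf (τ + 2 * (ℓ : ℝ)) zb ≤ Tf τ zb * Tf (τ + 2 * (ℓ : ℝ)) z :=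
    Tf_cross hτ (le_add_of_nonneg_right (by positivity)) hzb hzbz hz1
  have hpow : z ^ (τ / 2) * zb ^ ((τ + 2 * (ℓ : ℝ)) / 2) ≤
      zb ^ (τ / 2) * z ^ ((τ + 2 * (ℓ : ℝ)) / 2) := by
    have he : (τ + 2 * (ℓ : ℝ)) / 2 = τ / 2 + (ℓ : ℝ) := by ring
    rw [he, Real.rpow_add hzb, Real.rpow_add hz0, Real.rpow_natCast, Real.rpow_natCast]
    have hℓ : zb ^ ℓ ≤ z ^ ℓ := pow_le_pow_left₀ hzb.le hzbz ℓ
    have h1 : (0:ℝ) ≤ z ^ (τ / 2) * zb ^ (τ / 2) :=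
      mul_nonneg (Real.rpow_nonneg hz0.le _) (Real.rpow_nonneg hzb.le _)
    calc z ^ (τ / 2) * (zb ^ (τ / 2) * zb ^ ℓ)
        = z ^ (τ / 2) * zb ^ (τ / 2) * zb ^ ℓ := by ring
      _ ≤ z ^ (τ / 2) * zb ^ (τ / 2) * z ^ ℓ := mul_le_mul_of_nonneg_left hℓ h1
      _ = zb ^ (τ / 2) * (z ^ (τ / 2) * z ^ ℓ) := by ring
  calc z ^ (τ / 2) * Tf τ z * (zb ^ ((τ + 2 * (ℓ : ℝ)) / 2) * Tf (τ + 2 * (ℓ : ℝ)) zb)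
      = (z ^ (τ / 2) * zb ^ ((τ + 2 * (ℓ : ℝ)) / 2)) *
        (Tf τ z * Tf (τ + 2 * (ℓ : ℝ)) zb) := by ring
    _ ≤ (zb ^ (τ / 2) * z ^ ((τ + 2 * (ℓ : ℝ)) / 2)) *
        (Tf τ zb * Tf (τ + 2 * (ℓ : ℝ)) z) := by
        apply mul_le_mul hpow hTf
        · exact mul_nonneg (Tf_nonneg hτ hz0.le) (Tf_nonneg hτ' hzb.le)
        · exact mul_nonneg (Real.rpow_nonneg hzb.le _) (Real.rpow_nonneg hz0.le _)
    _ = zb ^ (τ / 2) * Tf τ zb * (z ^ ((τ + 2 * (ℓ : ℝ)) / 2) * Tf (τ + 2 * (ℓ : ℝ)) z) := by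
        ring


/-- d = 2 case of the approximate factorization Lemma 2.6/A.1: for the
2D conformal block `g(z,z̄) = ½[k_τ(z̄)k_{τ+2ℓ}(z) + k_τ(z)k_{τ+2ℓ}(z̄)]` with spin
`ℓ ≥ 1`, one has the two-sided bound
`½ k_τ(z̄)k_{τ+2ℓ}(z) ≤ g(z,z̄) ≤ ½(1 + (1-ρ(a)²)^(-1/2)) k_τ(z̄)k_{τ+2ℓ}(z)`
for `0 ≤ z̄ ≤ a < b ≤ z < 1`. -/
theorem stmt8 (a b : ℝ) (ha : 0 < a) (hab : a < b) (hb : b < 1)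
    (τ : ℝ) (hτ : 0 ≤ τ) (ℓ : ℕ) (hℓ : 1 ≤ ℓ)
    (z zb : ℝ) (hzb0 : 0 ≤ zb) (hzba : zb ≤ a) (hbz : b ≤ z) (hz1 : z < 1) :
    (1 / 2) * (kfun τ zb * kfun (τ + 2 * (ℓ : ℝ)) z) ≤
      (1 / 2) * (kfun τ zb * kfun (τ + 2 * (ℓ : ℝ)) z +
        kfun τ z * kfun (τ + 2 * (ℓ : ℝ)) zb) ∧
    (1 / 2) * (kfun τ zb * kfun (τ + 2 * (ℓ : ℝ)) z +
        kfun τ z * kfun (τ + 2 * (ℓ : ℝ)) zb) ≤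
      (1 / 2) * (1 + (1 - rhoVar a ^ 2) ^ (-(1 : ℝ) / 2)) *
        (kfun τ zb * kfun (τ + 2 * (ℓ : ℝ)) z) := by
  have hτ' : 0 ≤ τ + 2 * (ℓ : ℝ) := by positivity
  have hz0 : 0 < z := lt_of_lt_of_le (ha.trans (hab.trans_le hbz)) (le_refl z)
  have hB : 0 ≤ kfun τ z * kfun (τ + 2 * (ℓ : ℝ)) zb :=
    mul_nonneg (kfun_nonneg hτ hz0.le) (kfun_nonneg hτ' hzb0)
  have hA : 0 ≤ kfun τ zb * kfun (τ + 2 * (ℓ : ℝ)) z :=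
    mul_nonneg (kfun_nonneg hτ hzb0) (kfun_nonneg hτ' hz0.le)
  -- the constant is at least 1
  have hρ : 0 < rhoVar a ∧ rhoVar a < 1 := by
    constructor
    · unfold rhoVar
      have : 0 < (1 + Real.sqrt (1 - a)) ^ 2 := by positivity
      positivity
    · unfold rhoVar
      rw [div_lt_one (by positivity)]
      have h1 : 0 ≤ Real.sqrt (1 - a) := Real.sqrt_nonneg _
      nlinarith [hab.trans hb]
  have hρ2 : 0 < 1 - rhoVar a ^ 2 := by nlinarith [hρ.1, hρ.2]
  have hρ2' : 1 - rhoVar a ^ 2 ≤ 1 := by nlinarith [hρ.1]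
  have hC : 1 ≤ (1 - rhoVar a ^ 2) ^ (-(1 : ℝ) / 2) :=
    Real.one_le_rpow_of_pos_of_le_one_of_nonpos hρ2 hρ2' (by norm_num)
  constructor
  · nlinarith
  · -- main cross inequality
    have hmain : kfun τ z * kfun (τ + 2 * (ℓ : ℝ)) zb ≤ kfun τ zb * kfun (τ + 2 * (ℓ : ℝ)) z := by
      rcases eq_or_lt_of_le hzb0 with h0 | hzbpos
      · -- zb = 0 : right factor of LHS vanishes
        have : kfun (τ + 2 * (ℓ : ℝ)) zb = 0 := by
          rw [← h0, kfun_eq, Real.zero_rpow (by positivity : (τ + 2 * (ℓ : ℝ)) / 2 ≠ 0)]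
          ring
        rw [this, mul_zero]
        exact hA
      · exact kfun_cross hτ hzbpos (le_trans hzba (le_of_lt (hab.trans_le hbz))) hz1
    nlinarith [mul_le_mul_of_nonneg_left hmain (by norm_num : (0:ℝ) ≤ 1/2),
      mul_nonneg (sub_nonneg.mpr hC) hA]
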